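/- Let m ≥ 1, g ≥ 2, γ ∈ ZMod m, and let W = W(m, g, γ) be the twist group defined in the context, acting on V = Fin g → ZMod m × ZMod m. Then for every x ∈ V there exist σ ∈ W and ξ ∈ ZMod m with ξ = 0 or ξ = 1 such that (σ x) 0 = (0, ξ) and (σ x) i = (1, 1) for all i ≠ 0. (This is the normalization statement of Lemma 5.4: every m-Arf function on a surface of genus g > 1 admits a standard basis on which its values on the handle generators are (0, ξ, 1, …, 1) with ξ ∈ {0,1}.) -/

import Mathlib

/-- Shear of the `β`-components of `x : Fin g → ZMod m × ZMod m` by an amount depending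
only on the `α`-components. -/
def shearB (m g : ℕ) (h : (Fin g → ZMod m) → Fin g → ZMod m) :
    Equiv.Perm (Fin g → ZMod m × ZMod m) where
  toFun x k := ((x k).1, (x k).2 + h (fun l => (x l).1) k)
  invFun x k := ((x k).1, (x k).2 - h (fun l => (x l).1) k)
  left_inv x := by funext k; simp
  right_inv x := by funext k; simp

/-- Shear of the `α`-components of `x : Fin g → ZMod m × ZMod m` by an amount depending
only on the `β`-components. -/
def shearA (m g : ℕ) (h : (Fin g → ZMod m) → Fin g → ZMod m) :
    Equiv.Perm (Fin g → ZMod m × ZMod m) where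
  toFun x k := ((x k).1 + h (fun l => (x l).2) k, (x k).2)
  invFun x k := ((x k).1 - h (fun l => (x l).2) k, (x k).2)
  left_inv x := by funext k; simp
  right_inv x := by funext k; simp

/-- Apply the permutation `e` of `ZMod m × ZMod m` at the single coordinate `i`. -/
def atC (m g : ℕ) (i : Fin g) (e : Equiv.Perm (ZMod m × ZMod m)) :
    Equiv.Perm (Fin g → ZMod m × ZMod m) :=
  Equiv.piCongrRight fun k => if k = i then e else Equiv.refl _

/-- `(α, β) ↦ (−α, −β)`. -/
def negPair (m : ℕ) : Equiv.Perm (ZMod m × ZMod m) where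
  toFun p := (-p.1, -p.2)
  invFun p := (-p.1, -p.2)
  left_inv := by rintro ⟨a, b⟩; simp
  right_inv := by rintro ⟨a, b⟩; simp

/-- `(α, β) ↦ (−β, α)`. -/
def rotPair (m : ℕ) : Equiv.Perm (ZMod m × ZMod m) where
  toFun p := (-p.2, p.1)
  invFun p := (p.2, -p.1)
  left_inv := by rintro ⟨a, b⟩; simp
  right_inv := by rintro ⟨a, b⟩; simp

/-- `(α, β) ↦ (−β, α − γ − 1)`. -/
def t3Pair (m : ℕ) (γ : ZMod m) : Equiv.Perm (ZMod m × ZMod m) where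
  toFun p := (-p.2, p.1 - γ - 1)
  invFun p := (p.2 + γ + 1, -p.1)
  left_inv := by rintro ⟨a, b⟩; simp [Prod.ext_iff]; ring
  right_inv := by rintro ⟨a, b⟩; simp [Prod.ext_iff]; ring

/-- Dehn twist action `T1a(i) : (αᵢ, βᵢ) ↦ (αᵢ+βᵢ, βᵢ)`. -/
def T1a (m g : ℕ) (i : Fin g) : Equiv.Perm (Fin g → ZMod m × ZMod m) :=
  shearA m g fun b k => if k = i then b i else 0

/-- Dehn twist action `T1b(i) : (αᵢ, βᵢ) ↦ (αᵢ, βᵢ+αᵢ)`. -/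
def T1b (m g : ℕ) (i : Fin g) : Equiv.Perm (Fin g → ZMod m × ZMod m) :=
  shearB m g fun a k => if k = i then a i else 0

/-- Dehn twist action `T2(i,j) : βᵢ ↦ βᵢ − αⱼ − 1, βⱼ ↦ βⱼ − αᵢ − 1`. -/
def T2 (m g : ℕ) (i j : Fin g) : Equiv.Perm (Fin g → ZMod m × ZMod m) :=
  shearB m g fun a k => if k = i then -a j - 1 else if k = j then -a i - 1 else 0

/-- Dehn twist action `T3` at the index `i`: `(αᵢ, βᵢ) ↦ (−βᵢ, αᵢ − γ − 1)`. -/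
def T3 (m g : ℕ) (i : Fin g) (γ : ZMod m) : Equiv.Perm (Fin g → ZMod m × ZMod m) :=
  atC m g i (t3Pair m γ)

/-- Dehn twist action `T4(i,j)`: interchange the pairs at positions `i` and `j`. -/
def T4 (m g : ℕ) (i j : Fin g) : Equiv.Perm (Fin g → ZMod m × ZMod m) :=
  Equiv.arrowCongr (Equiv.swap i j) (Equiv.refl _)

/-- Dehn twist action `T5a(i) : (αᵢ, βᵢ) ↦ (−αᵢ, −βᵢ)`. -/
def T5a (m g : ℕ) (i : Fin g) : Equiv.Perm (Fin g → ZMod m × ZMod m) :=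
  atC m g i (negPair m)

/-- Dehn twist action `T5b(i) : (αᵢ, βᵢ) ↦ (−βᵢ, αᵢ)`. -/
def T5b (m g : ℕ) (i : Fin g) : Equiv.Perm (Fin g → ZMod m × ZMod m) :=
  atC m g i (rotPair m)

/-- The generators of the twist group: `T1a(i)`, `T1b(i)`, `T2(i,j)` for `i ≠ j`, `T3` at
the last index, `T4(i,j)` for `i ≠ j`, `T5a(i)`, `T5b(i)`. -/
def twistGens (m g : ℕ) (hg : 0 < g) (γ : ZMod m) :
    Set (Equiv.Perm (Fin g → ZMod m × ZMod m)) :=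
  (Set.range fun i => T1a m g i) ∪ (Set.range fun i => T1b m g i) ∪
    {σ | ∃ i j : Fin g, i ≠ j ∧ σ = T2 m g i j} ∪
    {T3 m g ⟨g - 1, Nat.sub_lt hg Nat.one_pos⟩ γ} ∪
    {σ | ∃ i j : Fin g, i ≠ j ∧ σ = T4 m g i j} ∪
    (Set.range fun i => T5a m g i) ∪ (Set.range fun i => T5b m g i)

/-- The twist group `W(m, g, γ)`: the subgroup of `Equiv.Perm (Fin g → ZMod m × ZMod m)`
generated by the Dehn twist actions. -/
def twistGroup (m g : ℕ) (hg : 0 < g) (γ : ZMod m) :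
    Subgroup (Equiv.Perm (Fin g → ZMod m × ZMod m)) :=
  Subgroup.closure (twistGens m g hg γ)

namespace TwistNormAux

open Function Equiv

variable {m g : ℕ} (hg : 0 < g) (γ : ZMod m)

/-! ### Membership of generators -/

lemma mem_T1a (i : Fin g) : T1a m g i ∈ twistGroup m g hg γ :=
  Subgroup.subset_closure (by
    simp only [twistGens, Set.mem_union, Set.mem_range]
    exact Or.inl (Or.inl (Or.inl (Or.inl (Or.inl (Or.inl ⟨i, rfl⟩))))))

lemma mem_T1b (i : Fin g) : T1b m g i ∈ twistGroup m g hg γ :=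
  Subgroup.subset_closure (by
    simp only [twistGens, Set.mem_union, Set.mem_range]
    exact Or.inl (Or.inl (Or.inl (Or.inl (Or.inl (Or.inr ⟨i, rfl⟩))))))

lemma mem_T2 (i j : Fin g) (hij : i ≠ j) : T2 m g i j ∈ twistGroup m g hg γ :=
  Subgroup.subset_closure (by
    simp only [twistGens, Set.mem_union, Set.mem_setOf_eq]
    exact Or.inl (Or.inl (Or.inl (Or.inl (Or.inr ⟨i, j, hij, rfl⟩)))))

lemma mem_T5a (i : Fin g) : T5a m g i ∈ twistGroup m g hg γ :=
  Subgroup.subset_closure (by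
    simp only [twistGens, Set.mem_union, Set.mem_range]
    exact Or.inl (Or.inr ⟨i, rfl⟩))

lemma mem_T5b (i : Fin g) : T5b m g i ∈ twistGroup m g hg γ :=
  Subgroup.subset_closure (by
    simp only [twistGens, Set.mem_union, Set.mem_range]
    exact Or.inr ⟨i, rfl⟩)

/-! ### Local reachability at a single coordinate -/

/-- `p` can be transformed into `q` at coordinate `i` by an element of the twist group
fixing all the other coordinates. -/
def LReach (i : Fin g) (p q : ZMod m × ZMod m) : Prop :=
  ∃ σ ∈ twistGroup m g hg γ,
    ∀ x : Fin g → ZMod m × ZMod m, x i = p → σ x = Function.update x i q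

lemma lreach_refl (i : Fin g) (p : ZMod m × ZMod m) : LReach hg γ i p p :=
  ⟨1, one_mem _, fun x hx => by
    rw [Equiv.Perm.one_apply, ← hx, Function.update_eq_self]⟩

lemma lreach_trans {i : Fin g} {p q r : ZMod m × ZMod m}
    (h1 : LReach hg γ i p q) (h2 : LReach hg γ i q r) : LReach hg γ i p r := by
  obtain ⟨σ, hσ, hσx⟩ := h1
  obtain ⟨τ, hτ, hτx⟩ := h2
  refine ⟨τ * σ, mul_mem hτ hσ, fun x hx => ?_⟩
  rw [Equiv.Perm.mul_apply, hσx x hx, hτx _ (Function.update_self ..), Function.update_idem]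

lemma lreach_symm {i : Fin g} {p q : ZMod m × ZMod m}
    (h : LReach hg γ i p q) : LReach hg γ i q p := by
  obtain ⟨σ, hσ, hσx⟩ := h
  refine ⟨σ⁻¹, inv_mem hσ, fun x hx => ?_⟩
  have h1 := hσx (Function.update x i p) (Function.update_self ..)
  rw [Function.update_idem, ← hx, Function.update_eq_self] at h1
  calc σ⁻¹ x = σ⁻¹ (σ (Function.update x i p)) := by rw [h1]
    _ = Function.update x i p := Equiv.symm_apply_apply σ _

lemma reach_T1a (i : Fin g) (p : ZMod m × ZMod m) :
    LReach hg γ i p (p.1 + p.2, p.2) := by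
  refine ⟨T1a m g i, mem_T1a hg γ i, fun x hx => ?_⟩
  funext k
  simp only [T1a, shearA, Equiv.coe_fn_mk]
  rcases eq_or_ne k i with rfl | hk
  · rw [Function.update_self, hx]
    simp [hx]
  · rw [Function.update_of_ne hk, if_neg hk, add_zero]

lemma reach_T1b (i : Fin g) (p : ZMod m × ZMod m) :
    LReach hg γ i p (p.1, p.2 + p.1) := by
  refine ⟨T1b m g i, mem_T1b hg γ i, fun x hx => ?_⟩
  funext k
  simp only [T1b, shearB, Equiv.coe_fn_mk]
  rcases eq_or_ne k i with rfl | hk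
  · rw [Function.update_self, hx]
    simp [hx]
  · rw [Function.update_of_ne hk, if_neg hk, add_zero]

lemma reach_neg (i : Fin g) (p : ZMod m × ZMod m) :
    LReach hg γ i p (-p.1, -p.2) := by
  refine ⟨T5a m g i, mem_T5a hg γ i, fun x hx => ?_⟩
  funext k
  simp only [T5a, atC, Equiv.piCongrRight, Equiv.coe_fn_mk, Pi.map_apply]
  rcases eq_or_ne k i with rfl | hk
  · rw [Function.update_self, if_pos rfl, hx]
    rfl
  · rw [Function.update_of_ne hk, if_neg hk]
    rfl

lemma reach_rot (i : Fin g) (p : ZMod m × ZMod m) :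
    LReach hg γ i p (-p.2, p.1) := by
  refine ⟨T5b m g i, mem_T5b hg γ i, fun x hx => ?_⟩
  funext k
  simp only [T5b, atC, Equiv.piCongrRight, Equiv.coe_fn_mk, Pi.map_apply]
  rcases eq_or_ne k i with rfl | hk
  · rw [Function.update_self, if_pos rfl, hx]
    rfl
  · rw [Function.update_of_ne hk, if_neg hk]
    rfl

lemma reach_shear (i : Fin g) (p : ZMod m × ZMod m) (k : ℤ) :
    LReach hg γ i p (p.1 + (k : ZMod m) * p.2, p.2) := by
  induction k using Int.induction_on with
  | zero => simpa using lreach_refl hg γ i p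
  | succ n ih =>
      have h := lreach_trans hg γ ih
        (reach_T1a hg γ i (p.1 + ((n : ℤ) : ZMod m) * p.2, p.2))
      convert h using 2
      push_cast
      ring
  | pred n ih =>
      have h1 : LReach hg γ i (p.1 + (((-(n : ℤ) - 1) : ℤ) : ZMod m) * p.2, p.2)
          (p.1 + (((-(n : ℤ)) : ℤ) : ZMod m) * p.2, p.2) := by
        have h := reach_T1a hg γ i (p.1 + (((-(n : ℤ) - 1) : ℤ) : ZMod m) * p.2, p.2)
        convert h using 2
        push_cast
        ring
      exact lreach_trans hg γ ih (lreach_symm hg γ h1)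

/-! ### Euclidean reduction -/

lemma gcd_step (a b : ℤ) : Int.gcd (-b) (a % b) = Int.gcd a b := by
  apply Nat.dvd_antisymm
  · rw [← Int.natCast_dvd_natCast]
    have h1 : (↑(Int.gcd (-b) (a % b)) : ℤ) ∣ -b := Int.gcd_dvd_left _ _
    have h2 : (↑(Int.gcd (-b) (a % b)) : ℤ) ∣ a % b := Int.gcd_dvd_right _ _
    refine Int.dvd_coe_gcd ?_ (dvd_neg.mp h1)
    have h3 : (↑(Int.gcd (-b) (a % b)) : ℤ) ∣ b * (a / b) + a % b :=
      dvd_add ((dvd_neg.mp h1).mul_right _) h2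
    rwa [Int.mul_ediv_add_emod a b] at h3
  · rw [← Int.natCast_dvd_natCast]
    have h1 : (↑(Int.gcd a b) : ℤ) ∣ a := Int.gcd_dvd_left _ _
    have h2 : (↑(Int.gcd a b) : ℤ) ∣ b := Int.gcd_dvd_right _ _
    refine Int.dvd_coe_gcd (dvd_neg.mpr h2) ?_
    have h3 : a % b = a - b * (a / b) := by
      have := Int.mul_ediv_add_emod a b
      omega
    rw [h3]
    exact dvd_sub h1 (h2.mul_right _)

lemma emod_natAbs_lt (a : ℤ) {b : ℤ} (h : b ≠ 0) : (a % b).natAbs < b.natAbs := by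
  have h1 : 0 ≤ a % b := Int.emod_nonneg a h
  have h2 : a % b < |b| := by
    rcases lt_or_gt_of_ne h with hb | hb
    · rw [abs_of_neg hb, ← Int.emod_neg]; exact Int.emod_lt_of_pos a (by omega)
    · rw [abs_of_pos hb]; exact Int.emod_lt_of_pos a hb
  rcases le_or_gt 0 b with hb | hb
  · rw [abs_of_nonneg hb] at h2; omega
  · rw [abs_of_neg hb] at h2; omega

lemma reach_gcd (i : Fin g) :
    ∀ n : ℕ, ∀ a b : ℤ, b.natAbs ≤ n →
      LReach hg γ i ((a : ZMod m), (b : ZMod m)) (((Int.gcd a b : ℕ) : ZMod m), 0) := by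
  intro n
  induction n using Nat.strong_induction_on with
  | _ n IH =>
    intro a b hb
    rcases eq_or_ne b 0 with rfl | hb0
    · have key : LReach hg γ i ((a : ZMod m), ((0 : ℤ) : ZMod m)) ((a.natAbs : ZMod m), 0) := by
        rcases le_or_gt 0 a with ha | ha
        · have e : ((a.natAbs : ℕ) : ZMod m) = ((a : ℤ) : ZMod m) := by
            rw [← Int.cast_natCast, Int.natAbs_of_nonneg ha]
          rw [e]
          simpa using lreach_refl hg γ i ((a : ZMod m), 0)
        · have h := reach_neg hg γ i ((a : ZMod m), ((0 : ℤ) : ZMod m))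
          have e : (-((a : ℤ) : ZMod m)) = ((a.natAbs : ℕ) : ZMod m) := by
            rw [← Int.cast_natCast, Int.ofNat_natAbs_of_nonpos ha.le, Int.cast_neg]
          simp only [Int.cast_zero, neg_zero] at h e ⊢
          rwa [e] at h
      simpa [Int.gcd_zero_right] using key
    · set r := a % b with hr
      have step1 : LReach hg γ i ((a : ZMod m), (b : ZMod m)) ((r : ZMod m), (b : ZMod m)) := by
        have h := reach_shear hg γ i ((a : ZMod m), (b : ZMod m)) (-(a / b))
        have e : (r : ZMod m) = (a : ZMod m) + ((-(a / b) : ℤ) : ZMod m) * (b : ZMod m) := by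
          have h4 : r = a - b * (a / b) := by
            have := Int.mul_ediv_add_emod a b
            omega
          rw [h4]
          push_cast
          ring
        rwa [← e] at h
      have step2 : LReach hg γ i ((r : ZMod m), (b : ZMod m)) (((-b : ℤ) : ZMod m), (r : ZMod m)) := by
        have h := reach_rot hg γ i ((r : ZMod m), (b : ZMod m))
        have e : ((-b : ℤ) : ZMod m) = -((b : ℤ) : ZMod m) := by push_cast; ring
        rwa [← e] at h
      have hlt : r.natAbs < n := lt_of_lt_of_le (emod_natAbs_lt a hb0) hb
      have step3 := IH r.natAbs hlt (-b) r le_rfl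
      have hgcd : Int.gcd (-b) r = Int.gcd a b := gcd_step a b
      rw [hgcd] at step3
      exact lreach_trans hg γ step1 (lreach_trans hg γ step2 step3)

/-! ### Convenient normal forms -/

variable [NeZero m]

lemma reach_diag (i : Fin g) (p : ZMod m × ZMod m) :
    ∃ d : ZMod m, LReach hg γ i p (d, 0) := by
  have h := reach_gcd hg γ i (p.2.val : ℕ) (p.1.val : ℤ) (p.2.val : ℤ) (Int.natAbs_natCast _).le
  refine ⟨((Int.gcd (p.1.val : ℤ) (p.2.val : ℤ) : ℕ) : ZMod m), ?_⟩
  have e1 : (((p.1.val : ℤ)) : ZMod m) = p.1 := by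
    rw [Int.cast_natCast, ZMod.natCast_zmod_val]
  have e2 : (((p.2.val : ℤ)) : ZMod m) = p.2 := by
    rw [Int.cast_natCast, ZMod.natCast_zmod_val]
  rwa [e1, e2] at h

lemma reach_zero_fst (i : Fin g) (p : ZMod m × ZMod m) :
    ∃ d : ZMod m, LReach hg γ i p (0, d) := by
  obtain ⟨d, hd⟩ := reach_diag hg γ i p
  refine ⟨d, lreach_trans hg γ hd ?_⟩
  have h := reach_rot hg γ i ((d : ZMod m), (0 : ZMod m))
  simpa using h

lemma reach_one_one (i : Fin g) (c : ZMod m) :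
    LReach hg γ i (c, -1) (1, 1) := by
  have h := reach_gcd hg γ i 1 (c.val : ℤ) (-1) (by simp)
  have e1 : (((c.val : ℤ)) : ZMod m) = c := by
    rw [Int.cast_natCast, ZMod.natCast_zmod_val]
  have e2 : ((-1 : ℤ) : ZMod m) = -1 := by push_cast; ring
  have e3 : Int.gcd (c.val : ℤ) (-1) = 1 := by simp [Int.gcd_neg]
  rw [e1, e2, e3] at h
  refine lreach_trans hg γ h ?_
  have h2 := reach_T1b hg γ i ((1 : ZMod m), (0 : ZMod m))
  simpa using h2

/-! ### The `T2` move -/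

omit [NeZero m] in
lemma T2_apply (i j : Fin g) (hij : i ≠ j) (x : Fin g → ZMod m × ZMod m) :
    T2 m g i j x =
      Function.update (Function.update x i ((x i).1, (x i).2 - (x j).1 - 1)) j
        ((x j).1, (x j).2 - (x i).1 - 1) := by
  funext k
  simp only [T2, shearB, Equiv.coe_fn_mk]
  rcases eq_or_ne k j with rfl | hkj
  · rw [Function.update_self, if_neg (Ne.symm hij), if_pos rfl]
    congr 1
    ring
  · rw [Function.update_of_ne hkj]
    rcases eq_or_ne k i with rfl | hki
    · rw [Function.update_self, if_pos rfl]
      congr 1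
      ring
    · rw [Function.update_of_ne hki, if_neg hki, if_neg hkj, add_zero]


/-! ### Phase 2: normalize all handles except the first -/

lemma phase2 :
    ∀ k : ℕ, k ≤ g → ∀ x : Fin g → ZMod m × ZMod m,
      ∃ σ ∈ twistGroup m g hg γ, ∃ b : ZMod m,
        (σ x) ⟨0, hg⟩ = (0, b) ∧
        ∀ j : Fin g, j ≠ ⟨0, hg⟩ → (j : ℕ) < k → (σ x) j = (1, 1) := by
  intro k
  induction k with
  | zero =>
      intro _ x
      obtain ⟨d, σ, hσ, hσx⟩ := reach_zero_fst hg γ ⟨0, hg⟩ (x ⟨0, hg⟩)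
      refine ⟨σ, hσ, d, ?_, fun j _ hj => absurd hj (by omega)⟩
      rw [hσx x rfl, Function.update_self]
  | succ k IH =>
      intro hk x
      obtain ⟨σ₁, hσ₁, b, h0, hj⟩ := IH (by omega) x
      rcases Nat.eq_zero_or_pos k with rfl | hkpos
      · refine ⟨σ₁, hσ₁, b, h0, fun j hj0 hjlt => ?_⟩
        exfalso
        exact hj0 (by ext; simp; omega)
      · set i : Fin g := ⟨k, by omega⟩ with hi
        have hii0 : i ≠ (⟨0, hg⟩ : Fin g) :=
          Fin.ne_of_val_ne (by simpa using hkpos.ne')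
        set y := σ₁ x with hy
        obtain ⟨d, σ₂, hσ₂, hσ₂x⟩ := reach_diag hg γ i (y i)
        have hy₂ : σ₂ y = Function.update y i (d, 0) := hσ₂x y rfl
        set y₂ := Function.update y i (d, 0) with hy₂def
        have e1 : y₂ i = (d, 0) := Function.update_self ..
        have e2 : y₂ ⟨0, hg⟩ = (0, b) := by
          rw [hy₂def, Function.update_of_ne (Ne.symm hii0)]
          exact h0
        have hy₃ : T2 m g i ⟨0, hg⟩ y₂ =
            Function.update (Function.update y₂ i (d, -1)) ⟨0, hg⟩ (0, b - d - 1) := by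
          rw [T2_apply i ⟨0, hg⟩ hii0 y₂, e1, e2]
          have ea : ((d, 0).2 - ((0 : ZMod m), b).1 - 1 : ZMod m) = -1 := by simp
          have eb : (((0 : ZMod m), b).2 - ((d : ZMod m), 0).1 - 1 : ZMod m) = b - d - 1 := by simp
          rw [ea, eb]
        set y₃ := Function.update (Function.update y₂ i (d, -1)) ⟨0, hg⟩ (0, b - d - 1)
          with hy₃def
        have hy₃i : y₃ i = (d, -1) := by
          rw [hy₃def, Function.update_of_ne hii0, Function.update_self]
        obtain ⟨σ₄, hσ₄, hσ₄x⟩ := reach_one_one hg γ i d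
        have hy₄ : σ₄ y₃ = Function.update y₃ i (1, 1) := hσ₄x y₃ hy₃i
        refine ⟨σ₄ * (T2 m g i ⟨0, hg⟩ * (σ₂ * σ₁)),
          mul_mem hσ₄ (mul_mem (mem_T2 hg γ i ⟨0, hg⟩ hii0) (mul_mem hσ₂ hσ₁)),
          b - d - 1, ?_, ?_⟩
        · simp only [Equiv.Perm.mul_apply]
          rw [← hy, hy₂, hy₃, hy₄, Function.update_of_ne (Ne.symm hii0), hy₃def,
            Function.update_self]
        · intro j hj0 hjlt
          simp only [Equiv.Perm.mul_apply]
          rw [← hy, hy₂, hy₃, hy₄]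
          rcases eq_or_ne j i with rfl | hji
          · rw [Function.update_self]
          · rw [Function.update_of_ne hji, hy₃def, Function.update_of_ne hj0,
              Function.update_of_ne hji, hy₂def, Function.update_of_ne hji]
            refine hj j hj0 ?_
            have hjk : (j : ℕ) ≠ k := by
              intro h
              exact hji (by ext; simp [hi, h])
            omega

/-! ### Phase 3: normalize the first handle using the second -/

lemma phase3 (hg2 : 2 ≤ g) :
    ∀ n : ℕ, ∀ c : ZMod m, c.val ≤ n → ∀ x : Fin g → ZMod m × ZMod m,
      x ⟨0, hg⟩ = (0, c) → x ⟨1, by omega⟩ = (1, 1) →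
      ∃ σ ∈ twistGroup m g hg γ, ∃ ξ : ZMod m, (ξ = 0 ∨ ξ = 1) ∧
        σ x = Function.update x ⟨0, hg⟩ (0, ξ) := by
  intro n
  induction n with
  | zero =>
      intro c hc x h0 h1
      have hc0 : c = 0 := by
        have hcv : c = (c.val : ZMod m) := (ZMod.natCast_zmod_val c).symm
        rw [hcv, Nat.le_zero.mp hc]
        simp
      subst hc0
      refine ⟨1, one_mem _, 0, Or.inl rfl, ?_⟩
      rw [Equiv.Perm.one_apply, ← h0, Function.update_eq_self]
  | succ n IH =>
      intro c hc x h0 h1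
      rcases Nat.lt_or_ge c.val 2 with hlt | hge
      · refine ⟨1, one_mem _, c, ?_, ?_⟩
        · have hcv : c = (c.val : ZMod m) := (ZMod.natCast_zmod_val c).symm
          have : c.val = 0 ∨ c.val = 1 := by omega
          rcases this with h | h
          · left; rw [hcv, h]; simp
          · right; rw [hcv, h]; simp
        · rw [Equiv.Perm.one_apply, ← h0, Function.update_eq_self]
      · set i0 : Fin g := ⟨0, hg⟩ with hi0
        set i1 : Fin g := ⟨1, by omega⟩ with hi1
        have hne : i0 ≠ i1 := Fin.ne_of_val_ne (by norm_num)
        have hx₁ : T2 m g i0 i1 x =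
            Function.update (Function.update x i0 (0, c - 2)) i1 (1, 0) := by
          rw [T2_apply i0 i1 hne x, h0, h1]
          have ea : (((0 : ZMod m), c).2 - ((1 : ZMod m), 1).1 - 1 : ZMod m) = c - 2 := by
            simp; ring
          have eb : (((1 : ZMod m), 1).2 - ((0 : ZMod m), c).1 - 1 : ZMod m) = 0 := by simp
          rw [ea, eb]
        have hstep : LReach hg γ i1 (1, 0) (1, 1) := by
          simpa using reach_T1b hg γ i1 ((1 : ZMod m), (0 : ZMod m))
        obtain ⟨τ, hτ, hτx⟩ := hstep
        have hx₂ : τ (T2 m g i0 i1 x) = Function.update x i0 (0, c - 2) := by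
          rw [hx₁, hτx _ (Function.update_self ..), Function.update_idem]
          have hv : (Function.update x i0 (0, c - 2)) i1 = (1, 1) := by
            rw [Function.update_of_ne (Ne.symm hne)]
            exact h1
          rw [← hv, Function.update_eq_self]
        have hval : (c - 2).val ≤ n := by
          have hvm : c.val < m := ZMod.val_lt c
          have e : c - 2 = ((c.val - 2 : ℕ) : ZMod m) := by
            have hcv : c = (c.val : ZMod m) := (ZMod.natCast_zmod_val c).symm
            rw [Nat.cast_sub hge, ← hcv]
            push_cast
            ring
          rw [e, ZMod.val_cast_of_lt (by omega)]
          omega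
        obtain ⟨σ', hσ', ξ, hξ, hfin⟩ := IH (c - 2) hval (Function.update x i0 (0, c - 2))
          (Function.update_self ..)
          (by rw [Function.update_of_ne (Ne.symm hne)]; exact h1)
        refine ⟨σ' * (τ * T2 m g i0 i1),
          mul_mem hσ' (mul_mem hτ (mem_T2 hg γ i0 i1 hne)), ξ, hξ, ?_⟩
        simp only [Equiv.Perm.mul_apply]
        rw [hx₂, hfin, Function.update_idem]

end TwistNormAux

/-- Lemma 5.4 (normalization): for `g > 1`, every tuple of values of an `m`-Arf function on
the handle generators can be transformed by the twist group into `(0, ξ, 1, …, 1)` with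
`ξ ∈ {0, 1}`. -/
theorem twist_normalization (m g : ℕ) (hm : 1 ≤ m) (hg : 2 ≤ g) (γ : ZMod m)
    (x : Fin g → ZMod m × ZMod m) :
    ∃ σ ∈ twistGroup m g (by omega) γ, ∃ ξ : ZMod m, (ξ = 0 ∨ ξ = 1) ∧
      (σ x) ⟨0, by omega⟩ = (0, ξ) ∧
      ∀ i : Fin g, i ≠ ⟨0, by omega⟩ → (σ x) i = (1, 1) := by
  haveI : NeZero m := ⟨by omega⟩
  have hg' : 0 < g := by omega
  obtain ⟨σ, hσ, b, h0, hj⟩ := TwistNormAux.phase2 hg' γ g le_rfl x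
  have h1 : (σ x) ⟨1, by omega⟩ = (1, 1) := by
    refine hj _ ?_ (Fin.is_lt _)
    simp [Fin.ext_iff]
  obtain ⟨σ', hσ', ξ, hξ, hfin⟩ :=
    TwistNormAux.phase3 hg' γ hg b.val b le_rfl (σ x) h0 h1
  refine ⟨σ' * σ, mul_mem hσ' hσ, ξ, hξ, ?_, ?_⟩
  · rw [Equiv.Perm.mul_apply, hfin, Function.update_self]
  · intro j hj0
    rw [Equiv.Perm.mul_apply, hfin, Function.update_of_ne hj0]
    exact hj j hj0 (Fin.is_lt _)
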